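/- Let G be a finite group acting by automorphisms on a free abelian group of finite rank A. If the action is Engel, then the action is trivial: a • g = a for all a ∈ A and g ∈ G. -/

import Mathlib

/-- Iterated generalized commutator for an action on an additive group:
`addEngel a g 0 = a`, `addEngel a g (n+1) = [addEngel a g n, g]`,
where `[a,g] = -a + (a • g)`. -/
def addEngel {G A : Type*} [Group G] [AddCommGroup A] [DistribMulAction G A]
    (a : A) (g : G) : ℕ → A
  | 0 => a
  | n + 1 => g • addEngel a g n - addEngel a g n

theorem stmt_3 {G A : Type*} [Group G] [Finite G] [AddCommGroup A]
    [Module.Free ℤ A] [Module.Finite ℤ A] [DistribMulAction G A]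
    (hEngel : ∀ (a : A) (g : G), ∃ n, 1 ≤ n ∧ addEngel a g n = 0) :
    ∀ (a : A) (g : G), g • a = a := by
  intro a g
  set f : Module.End ℤ A := DistribMulAction.toModuleEnd ℤ A g with hf
  set ν : Module.End ℤ A := f - 1 with hν
  -- addEngel a g n = ν^n a
  have hiter : ∀ (b : A) (n : ℕ), addEngel b g n = (ν ^ n) b := by
    intro b n
    induction n with
    | zero => simp [addEngel]
    | succ n ih =>
      rw [addEngel, ih, pow_succ']
      simp [hν, LinearMap.sub_apply, Module.End.mul_apply, hf]
  -- monotone vanishing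
  have hmono : ∀ (b : A) (n N : ℕ), n ≤ N → (ν ^ n) b = 0 → (ν ^ N) b = 0 := by
    intro b n N hle h
    obtain ⟨k, rfl⟩ := Nat.exists_eq_add_of_le hle
    rw [add_comm, pow_add, Module.End.mul_apply, h, map_zero]
  -- uniform nilpotency
  obtain ⟨s, hs⟩ := Module.Finite.fg_top (R := ℤ) (M := A)
  choose n hn1 hn2 using fun b => hEngel b g
  set N : ℕ := s.sup n with hN
  have hνN : ν ^ N = 0 := by
    have hker : (⊤ : Submodule ℤ A) ≤ LinearMap.ker (ν ^ N) := by
      rw [← hs, Submodule.span_le]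
      intro b hb
      simp only [SetLike.mem_coe, LinearMap.mem_ker]
      exact hmono b (n b) N (Finset.le_sup hb) (by rw [← hiter]; exact hn2 b)
    ext b
    simpa using hker (Submodule.mem_top (x := b))
  -- f ^ m = 1
  set m : ℕ := orderOf g with hm
  have hmpos : 0 < m := orderOf_pos g
  have hfm : f ^ m = 1 := by
    rw [hf, ← map_pow, hm, pow_orderOf_eq_one, map_one]
  -- binomial: sum_{i=0}^{m-1} ν^{i+1} * C(m, i+1) = 0
  have hcomm : Commute ν (1 : Module.End ℤ A) := Commute.one_right ν
  have hbin : ∑ i ∈ Finset.range m, ν ^ (i + 1) * (m.choose (i + 1) : Module.End ℤ A) = 0 := by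
    have h1 : ν + 1 = f := sub_add_cancel f 1
    have hexp := hcomm.add_pow m
    rw [h1, hfm, Finset.sum_range_succ'] at hexp
    simp only [pow_zero, one_pow, one_mul, mul_one, Nat.choose_zero_right,
      Nat.cast_one] at hexp
    exact right_eq_add.mp hexp
  -- descent: ν^{j+2} = 0 → ν^{j+1} = 0
  have hdesc : ∀ j : ℕ, ν ^ (j + 2) = 0 → ν ^ (j + 1) = 0 := by
    intro j h2
    have key : ν ^ j * (∑ i ∈ Finset.range m, ν ^ (i + 1) * (m.choose (i + 1) : Module.End ℤ A)) = 0 := by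
      rw [hbin, mul_zero]
    rw [Finset.mul_sum] at key
    have hsingle : ∀ i ∈ Finset.range m, i ≠ 0 →
        ν ^ j * (ν ^ (i + 1) * (m.choose (i + 1) : Module.End ℤ A)) = 0 := by
      intro i _ hi0
      obtain ⟨i, rfl⟩ := Nat.exists_eq_succ_of_ne_zero hi0
      have : ν ^ j * ν ^ (i + 1 + 1) = 0 := by
        rw [← pow_add]
        have : j + (i + 1 + 1) = (j + 2) + i := by ring
        rw [this, pow_add, h2, zero_mul]
      rw [← mul_assoc, this, zero_mul]
    rw [Finset.sum_eq_single_of_mem 0 (Finset.mem_range.mpr hmpos) hsingle,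
      ← mul_assoc, zero_add, pow_one, ← pow_succ, Nat.choose_one_right] at key
    have key2 : m • ν ^ (j + 1) = 0 := by
      rw [nsmul_eq_mul, (Nat.cast_commute m (ν ^ (j + 1))).eq]; exact key
    ext b
    have hb : m • ((ν ^ (j + 1)) b) = 0 := by
      rw [← LinearMap.smul_apply, key2]; rfl
    rw [← Nat.cast_smul_eq_nsmul ℤ] at hb
    have := (smul_eq_zero.mp hb).resolve_left (by exact_mod_cast hmpos.ne')
    simpa using this
  have hdown : ∀ k, ν ^ (k + 1) = 0 → ν ^ 1 = 0 := by
    intro k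
    induction k with
    | zero => exact id
    | succ k ih => exact fun h => ih (hdesc k h)
  have hν0 : ν = 0 := by
    rcases Nat.eq_zero_or_pos N with h0 | hpos
    · rw [h0, pow_zero] at hνN
      calc ν = ν * 1 := (mul_one ν).symm
        _ = ν * 0 := by rw [hνN]
        _ = 0 := mul_zero ν
    · obtain ⟨k, hk⟩ := Nat.exists_eq_add_of_le hpos
      have := hdown k (by rw [hk, add_comm] at hνN; exact hνN)
      rwa [pow_one] at this
  have hf1 : f = 1 := by
    have := sub_add_cancel f 1
    rw [← hν, hν0, zero_add] at this
    exact this.symm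
  calc g • a = f a := rfl
    _ = a := by rw [hf1]; rfl
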